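/- For all positive integers m and n, the probability that the order of a uniformly random permutation of {1,...,n} divides m is at most τ(m)/n, where τ(m) is the number of divisors of m. -/

import Mathlib

open scoped Classical
open Equiv Function Finset

private lemma minP_conj' {α : Type*} (π σ : Equiv.Perm α) (x : α) :
    Function.minimalPeriod (⇑(π * σ * π⁻¹)) (π x) = Function.minimalPeriod (⇑σ) x := by
  rw [Function.minimalPeriod_eq_minimalPeriod_iff]
  intro k
  show (⇑(π * σ * π⁻¹))^[k] (π x) = π x ↔ (⇑σ)^[k] x = x
  rw [← Equiv.Perm.coe_pow, ← Equiv.Perm.coe_pow, conj_pow]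
  simp [Equiv.Perm.mul_apply]

/-- base-point independence of the count -/
private lemma card_minP_base {k : ℕ} (q r : Fin k) (d : ℕ) :
    (univ.filter fun σ : Equiv.Perm (Fin k) => Function.minimalPeriod (⇑σ) q = d).card
      = (univ.filter fun σ : Equiv.Perm (Fin k) => Function.minimalPeriod (⇑σ) r = d).card := by
  apply Finset.card_bij' (fun σ _ => Equiv.swap q r * σ * (Equiv.swap q r)⁻¹)
    (fun σ _ => (Equiv.swap q r)⁻¹ * σ * Equiv.swap q r)
  · intro σ hσ
    simp only [mem_filter, mem_univ, true_and] at hσ ⊢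
    rw [← hσ]
    have := minP_conj' (Equiv.swap q r) σ q
    simpa using this
  · intro σ hσ
    simp only [mem_filter, mem_univ, true_and] at hσ ⊢
    rw [← hσ]
    have h1 : q = (Equiv.swap q r)⁻¹ r := by simp
    rw [h1]
    have := minP_conj' (Equiv.swap q r)⁻¹ σ r
    simpa using this
  · intro σ _; group
  · intro σ _; group

private lemma perm_minP_pos {α : Type*} [Finite α] (σ : Equiv.Perm α) (x : α) :
    0 < Function.minimalPeriod (⇑σ) x := by
  have h : Function.IsPeriodicPt (⇑σ) (orderOf σ) x := by
    show (⇑σ)^[orderOf σ] x = x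
    rw [← Equiv.Perm.coe_pow, pow_orderOf_eq_one]
    rfl
  exact h.minimalPeriod_pos (orderOf_pos σ)

private lemma minP_decompose_succ {k : ℕ} (p : Fin (k + 1 + 1)) (hp : p ≠ 0)
    (e : Equiv.Perm (Fin (k + 1))) :
    Function.minimalPeriod (⇑(Equiv.Perm.decomposeFin.symm (p, e))) 0
      = Function.minimalPeriod (⇑e) (p.pred hp) + 1 := by
  set σ := Equiv.Perm.decomposeFin.symm (p, e) with hσ
  set q := p.pred hp with hq
  set t := Function.minimalPeriod (⇑e) q with ht
  have ht1 : 0 < t := perm_minP_pos e q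
  have hpq : q.succ = p := Fin.succ_pred p hp
  have hstep : ∀ x : Fin (k + 1), σ x.succ = if e x = q then 0 else (e x).succ := by
    intro x
    rw [hσ, Equiv.Perm.decomposeFin_symm_apply_succ]
    by_cases h : e x = q
    · rw [h, hpq, if_pos rfl, Equiv.swap_apply_right]
    · rw [if_neg h, Equiv.swap_apply_of_ne_of_ne (Fin.succ_ne_zero _)]
      intro hc
      exact h (by rw [← hpq] at hc; exact Fin.succ_injective _ hc)
  have hzero : σ 0 = q.succ := by rw [hσ, Equiv.Perm.decomposeFin_symm_apply_zero, hpq]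
  have horbit : ∀ i, i < t → (σ ^ (i + 1)) 0 = ((e ^ i) q).succ := by
    intro i hi
    induction i with
    | zero => simpa using hzero
    | succ i ih =>
      have hi' : i < t := Nat.lt_of_succ_lt hi
      have hprev := ih hi'
      have hne : e ((e ^ i) q) ≠ q := by
        have hnp : ¬ Function.IsPeriodicPt (⇑e) (i + 1) q :=
          Function.not_isPeriodicPt_of_pos_of_lt_minimalPeriod (Nat.succ_ne_zero i) (ht ▸ hi)
        intro hc
        apply hnp
        show (⇑e)^[i + 1] q = q
        rw [← Equiv.Perm.coe_pow, pow_succ', Equiv.Perm.mul_apply]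
        exact hc
      calc (σ ^ (i + 1 + 1)) 0 = σ ((σ ^ (i + 1)) 0) := by
            rw [pow_succ', Equiv.Perm.mul_apply]
      _ = σ ((e ^ i) q).succ := by rw [hprev]
      _ = (e ((e ^ i) q)).succ := by rw [hstep, if_neg hne]
      _ = ((e ^ (i + 1)) q).succ := by rw [pow_succ', Equiv.Perm.mul_apply]
  have hreturn : (σ ^ (t + 1)) 0 = 0 := by
    obtain ⟨s, hs⟩ : ∃ s, t = s + 1 := ⟨t - 1, (Nat.succ_pred_eq_of_pos ht1).symm⟩
    have h1 : (σ ^ (s + 1)) 0 = ((e ^ s) q).succ := horbit s (by omega)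
    have h2 : e ((e ^ s) q) = q := by
      have : (e ^ t) q = q := by
        have := Function.isPeriodicPt_minimalPeriod (⇑e) q
        rw [← ht] at this
        show _ = _
        rw [Equiv.Perm.coe_pow]; exact this
      rw [hs, pow_succ', Equiv.Perm.mul_apply] at this; exact this
    calc (σ ^ (t + 1)) 0 = σ ((σ ^ t) 0) := by rw [pow_succ', Equiv.Perm.mul_apply]
    _ = σ ((e ^ s) q).succ := by rw [hs, h1]
    _ = 0 := by rw [hstep, if_pos h2]
  have hper : Function.IsPeriodicPt (⇑σ) (t + 1) 0 := by
    show (⇑σ)^[t+1] 0 = 0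
    rw [← Equiv.Perm.coe_pow]; exact hreturn
  have hle : Function.minimalPeriod (⇑σ) 0 ≤ t + 1 := hper.minimalPeriod_le (Nat.succ_pos t)
  have hge : t + 1 ≤ Function.minimalPeriod (⇑σ) 0 := by
    by_contra hlt
    push_neg at hlt
    set s := Function.minimalPeriod (⇑σ) 0 with hs
    have hs1 : 0 < s := perm_minP_pos σ 0
    have hper' : (σ ^ s) 0 = 0 := by
      have := Function.isPeriodicPt_minimalPeriod (⇑σ) 0
      rw [← hs] at this
      show _ = _
      rw [Equiv.Perm.coe_pow]; exact this
    obtain ⟨i, hi⟩ : ∃ i, s = i + 1 := ⟨s - 1, (Nat.succ_pred_eq_of_pos hs1).symm⟩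
    have : (σ ^ (i + 1)) 0 = ((e ^ i) q).succ := horbit i (by omega)
    rw [hi, this] at hper'
    exact Fin.succ_ne_zero _ hper'
  omega

private lemma decomposeFin_fst {k : ℕ} (σ : Equiv.Perm (Fin (k + 1))) :
    (Equiv.Perm.decomposeFin σ).1 = σ 0 := by
  conv_rhs => rw [← Equiv.symm_apply_apply Equiv.Perm.decomposeFin σ, ← Prod.mk.eta
    (p := Equiv.Perm.decomposeFin σ), Equiv.Perm.decomposeFin_symm_apply_zero]

private lemma card_minP_le : ∀ (k : ℕ) (d : ℕ), 1 ≤ d →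
    (univ.filter fun σ : Equiv.Perm (Fin (k + 1)) =>
      Function.minimalPeriod (⇑σ) 0 = d).card ≤ k.factorial := by
  intro k
  induction k with
  | zero =>
    intro d _
    refine le_trans (Finset.card_filter_le _ _) ?_
    simp [Finset.card_univ]
  | succ k IH =>
    intro d hd
    rcases eq_or_lt_of_le hd with hd1 | hd2
    · -- d = 1 : permutations fixing 0
      refine le_trans (Finset.card_le_card_of_injOn
        (fun σ => (Equiv.Perm.decomposeFin σ).2) (fun _ _ => Finset.mem_univ _) ?_) ?_
      · intro σ₁ h₁ σ₂ h₂ h12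
        simp only [coe_filter, mem_univ, true_and, Set.mem_setOf_eq] at h₁ h₂
        have f₁ : σ₁ 0 = 0 := Function.minimalPeriod_eq_one_iff_isFixedPt.mp
          (by rw [h₁]; exact hd1.symm)
        have f₂ : σ₂ 0 = 0 := Function.minimalPeriod_eq_one_iff_isFixedPt.mp
          (by rw [h₂]; exact hd1.symm)
        dsimp only at h12
        have e₁ : σ₁ = Equiv.Perm.decomposeFin.symm
            ((Equiv.Perm.decomposeFin σ₁).1, (Equiv.Perm.decomposeFin σ₁).2) := by
          rw [Prod.mk.eta, Equiv.symm_apply_apply]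
        have e₂ : σ₂ = Equiv.Perm.decomposeFin.symm
            ((Equiv.Perm.decomposeFin σ₂).1, (Equiv.Perm.decomposeFin σ₂).2) := by
          rw [Prod.mk.eta, Equiv.symm_apply_apply]
        rw [e₁, e₂, decomposeFin_fst, decomposeFin_fst, f₁, f₂, h12]
      · rw [Finset.card_univ, Fintype.card_perm, Fintype.card_fin]
    · -- d ≥ 2
      have hbij : (univ.filter fun σ : Equiv.Perm (Fin (k + 1 + 1)) =>
            Function.minimalPeriod (⇑σ) 0 = d).card
          = (univ.filter fun x : Fin (k + 1 + 1) × Equiv.Perm (Fin (k + 1)) =>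
              Function.minimalPeriod (⇑(Equiv.Perm.decomposeFin.symm x)) 0 = d).card := by
        apply Finset.card_bij' (fun σ _ => Equiv.Perm.decomposeFin σ)
          (fun x _ => Equiv.Perm.decomposeFin.symm x)
        · intro σ hσ
          simp only [mem_filter, mem_univ, true_and, Equiv.symm_apply_apply] at hσ ⊢
          exact hσ
        · intro x hx
          simp only [mem_filter, mem_univ, true_and] at hx ⊢
          exact hx
        · intro σ _; exact Equiv.symm_apply_apply _ _
        · intro x _; exact Equiv.apply_symm_apply _ _
      rw [hbij]
      have hmem : ∀ x ∈ (univ.filter fun x : Fin (k + 1 + 1) × Equiv.Perm (Fin (k + 1)) =>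
            Function.minimalPeriod (⇑(Equiv.Perm.decomposeFin.symm x)) 0 = d),
          x.1 ∈ (univ : Finset (Fin (k + 1 + 1))).erase 0 := by
        rintro ⟨p, e⟩ hx
        simp only [mem_filter, mem_univ, true_and] at hx
        refine Finset.mem_erase.mpr ⟨?_, Finset.mem_univ _⟩
        intro hp0
        subst hp0
        have : Equiv.Perm.decomposeFin.symm ((0 : Fin (k + 1 + 1)), e) 0 = 0 :=
          Equiv.Perm.decomposeFin_symm_apply_zero 0 e
        have h1 : Function.minimalPeriod
            (⇑(Equiv.Perm.decomposeFin.symm ((0 : Fin (k + 1 + 1)), e))) 0 = 1 :=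
          Function.minimalPeriod_eq_one_iff_isFixedPt.mpr this
        omega
      rw [Finset.card_eq_sum_card_fiberwise hmem]
      have hfib : ∀ p ∈ (univ : Finset (Fin (k + 1 + 1))).erase 0,
          ((univ.filter fun x : Fin (k + 1 + 1) × Equiv.Perm (Fin (k + 1)) =>
              Function.minimalPeriod (⇑(Equiv.Perm.decomposeFin.symm x)) 0 = d).filter
            (fun x => x.1 = p)).card ≤ k.factorial := by
        intro p hp
        have hp0 : p ≠ 0 := (Finset.mem_erase.mp hp).1
        calc ((univ.filter fun x : Fin (k + 1 + 1) × Equiv.Perm (Fin (k + 1)) =>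
              Function.minimalPeriod (⇑(Equiv.Perm.decomposeFin.symm x)) 0 = d).filter
            (fun x => x.1 = p)).card
            ≤ (univ.filter fun e : Equiv.Perm (Fin (k + 1)) =>
                Function.minimalPeriod (⇑e) (p.pred hp0) = d - 1).card := by
              apply Finset.card_le_card_of_injOn (fun x => x.2)
              · rintro ⟨p', e⟩ hx
                simp only [mem_coe, mem_filter, mem_univ, true_and] at hx ⊢
                obtain ⟨hQ, hp'⟩ := hx
                subst hp'
                rw [minP_decompose_succ _ hp0 e] at hQ
                omega
              · rintro ⟨p₁, e₁⟩ h₁ ⟨p₂, e₂⟩ h₂ h12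
                simp only [coe_filter, Set.mem_setOf_eq] at h₁ h₂
                simp only at h12
                rw [Prod.mk.injEq]
                exact ⟨h₁.2.trans h₂.2.symm, h12⟩
          _ = (univ.filter fun e : Equiv.Perm (Fin (k + 1)) =>
                Function.minimalPeriod (⇑e) 0 = d - 1).card := card_minP_base _ _ _
          _ ≤ k.factorial := IH (d - 1) (by omega)
      calc (∑ p ∈ (univ : Finset (Fin (k + 1 + 1))).erase 0,
            ((univ.filter fun x : Fin (k + 1 + 1) × Equiv.Perm (Fin (k + 1)) =>
              Function.minimalPeriod (⇑(Equiv.Perm.decomposeFin.symm x)) 0 = d).filter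
            (fun x => x.1 = p)).card)
          ≤ ∑ _p ∈ (univ : Finset (Fin (k + 1 + 1))).erase 0, k.factorial :=
            Finset.sum_le_sum hfib
        _ = (k + 1) * k.factorial := by
            rw [Finset.sum_const, smul_eq_mul, Finset.card_erase_of_mem (Finset.mem_univ _),
              Finset.card_univ, Fintype.card_fin]
            norm_num
        _ = (k + 1).factorial := (Nat.factorial_succ k).symm

set_option maxHeartbeats 800000 in
theorem prob_order_divides_le (m n : ℕ) (hm : 0 < m) (hn : 0 < n) :
    ((Finset.univ.filter (fun π : Equiv.Perm (Fin n) => orderOf π ∣ m)).card : ℝ) /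
        (Nat.factorial n) ≤ (m.divisors.card : ℝ) / n := by
  obtain ⟨n', rfl⟩ : ∃ n', n = n' + 1 := ⟨n - 1, by omega⟩
  set S := Finset.univ.filter (fun π : Equiv.Perm (Fin (n' + 1)) => orderOf π ∣ m) with hS
  have hkey : S.card ≤ m.divisors.card * n'.factorial := by
    have hmap : ∀ σ ∈ S, Function.minimalPeriod (⇑σ) 0 ∈ m.divisors := by
      intro σ hσ
      rw [hS, Finset.mem_filter] at hσ
      have hpt : Function.IsPeriodicPt (⇑σ) m 0 := by
        show (⇑σ)^[m] 0 = 0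
        rw [← Equiv.Perm.coe_pow, orderOf_dvd_iff_pow_eq_one.mp hσ.2]
        rfl
      exact Nat.mem_divisors.mpr ⟨hpt.minimalPeriod_dvd, hm.ne'⟩
    rw [Finset.card_eq_sum_card_fiberwise hmap]
    calc ∑ d ∈ m.divisors, (S.filter fun σ : Equiv.Perm (Fin (n' + 1)) => Function.minimalPeriod (⇑σ) 0 = d).card
        ≤ ∑ _d ∈ m.divisors, n'.factorial := by
          apply Finset.sum_le_sum
          intro d hd
          calc (S.filter fun σ : Equiv.Perm (Fin (n' + 1)) => Function.minimalPeriod (⇑σ) 0 = d).card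
              ≤ (univ.filter fun σ : Equiv.Perm (Fin (n' + 1)) =>
                  Function.minimalPeriod (⇑σ) 0 = d).card :=
                Finset.card_le_card
                  (Finset.filter_subset_filter _ (Finset.subset_univ S))
            _ ≤ n'.factorial := card_minP_le n' d (Nat.pos_of_mem_divisors hd)
      _ = m.divisors.card * n'.factorial := by rw [Finset.sum_const, smul_eq_mul]
  have hpos1 : (0 : ℝ) < (n' + 1).factorial := by positivity
  have hpos2 : (0 : ℝ) < ((n' : ℝ) + 1) := by positivity
  rw [div_le_div_iff₀ (by exact_mod_cast hpos1) (by push_cast; exact hpos2)]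
  have h2 : (S.card : ℝ) ≤ (m.divisors.card : ℝ) * (n'.factorial : ℝ) := by
    exact_mod_cast hkey
  have hf : ((n' + 1).factorial : ℝ) = ((n' : ℝ) + 1) * (n'.factorial : ℝ) := by
    rw [Nat.factorial_succ]; push_cast; ring
  have hfn : (0 : ℝ) ≤ (n'.factorial : ℝ) := by positivity
  push_cast
  nlinarith [h2, hf, hfn, hpos2]
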